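/- arXiv:0805.4001 — 2 statements merged into one kernel-verified Lean document; each statement's English description precedes it below -/
import Mathlib

section
/- Let R be a discrete valuation ring, A = R[z]/(z^n), and φ : M → N a homomorphism of finitely generated A-modules. Then: (1) φ is surjective if and only if the induced map M/zM → N/zN is surjective, and in that case the induced maps z^iM/z^{i+1}M → z^iN/z^{i+1}N are surjective for all 0 ≤ i < n; (2) φ is injective if and only if the induced map M^{(1)} → N^{(1)} on z-torsion submodules is injective, and in that case the induced maps M^{(i)}/M^{(i-1)} → N^{(i)}/N^{(i-1)} are injective for all 1 ≤ i ≤ n. -/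
open Polynomial

/-- The local model `A = R[z]/(z^n)` of a primitive multiple curve of multiplicity `n`. -/
abbrev Az (R : Type) [CommRing R] (n : ℕ) : Type :=
  R[X] ⧸ Ideal.span ({X ^ n} : Set R[X])

/-- The class of `z` (i.e. of `X`) in `A = R[z]/(z^n)`. -/
noncomputable def zc (R : Type) [CommRing R] (n : ℕ) : Az R n :=
  Ideal.Quotient.mk _ X

/-- The submodule `z^i M` of `M` (first canonical filtration). -/
noncomputable def zpowSub (R : Type) [CommRing R] (n : ℕ) (M : Type) [AddCommGroup M]
    [Module (Az R n) M] (i : ℕ) : Submodule (Az R n) M :=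
  LinearMap.range ((zc R n ^ i) • (LinearMap.id : M →ₗ[Az R n] M))

/-- The submodule `M^{(i)} = {u ∈ M : z^i • u = 0}` (second canonical filtration). -/
noncomputable def ztor (R : Type) [CommRing R] (n : ℕ) (M : Type) [AddCommGroup M]
    [Module (Az R n) M] (i : ℕ) : Submodule (Az R n) M :=
  LinearMap.ker ((zc R n ^ i) • (LinearMap.id : M →ₗ[Az R n] M))


lemma zcn_eq_zero (R : Type) [CommRing R] (n : ℕ) : (zc R n) ^ n = 0 := by
  show (Ideal.Quotient.mk _ X) ^ n = 0
  rw [← map_pow, Ideal.Quotient.eq_zero_iff_mem]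
  exact Ideal.mem_span_singleton_self _

lemma mem_zpowSub_iff (R : Type) [CommRing R] (n : ℕ) (M : Type) [AddCommGroup M]
    [Module (Az R n) M] (i : ℕ) (v : M) :
    v ∈ zpowSub R n M i ↔ ∃ w, (zc R n) ^ i • w = v := by
  simp only [zpowSub, LinearMap.mem_range, LinearMap.smul_apply, LinearMap.id_apply]

lemma mem_ztor_iff (R : Type) [CommRing R] (n : ℕ) (M : Type) [AddCommGroup M]
    [Module (Az R n) M] (i : ℕ) (v : M) :
    v ∈ ztor R n M i ↔ (zc R n) ^ i • v = 0 := by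
  simp only [ztor, LinearMap.mem_ker, LinearMap.smul_apply, LinearMap.id_apply]

/-- For `A = R[z]/(z^n)` over a DVR `R` and a homomorphism `φ : M → N` of
finitely generated `A`-modules: (1) `φ` is surjective iff the induced map `M/zM → N/zN` is
surjective, and then all induced maps `z^iM/z^{i+1}M → z^iN/z^{i+1}N` are surjective;
(2) `φ` is injective iff the induced map `M^{(1)} → N^{(1)}` on `z`-torsion submodules is
injective, and then all induced maps `M^{(i)}/M^{(i-1)} → N^{(i)}/N^{(i-1)}` are injective. -/
theorem stmt15 (R : Type) [CommRing R] [IsDomain R] [IsDiscreteValuationRing R] (n : ℕ)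
    (M N : Type) [AddCommGroup M] [Module (Az R n) M] [Module.Finite (Az R n) M]
    [AddCommGroup N] [Module (Az R n) N] [Module.Finite (Az R n) N]
    (φ : M →ₗ[Az R n] N) :
    -- (1) surjectivity criterion
    ((∀ ψ : (M ⧸ zpowSub R n M 1) →ₗ[Az R n] (N ⧸ zpowSub R n N 1),
        (∀ m : M, ψ (Submodule.Quotient.mk m) = Submodule.Quotient.mk (φ m)) →
        (Function.Surjective φ ↔ Function.Surjective ψ)) ∧
      (Function.Surjective φ → ∀ i < n,
        ∀ ψi : (zpowSub R n M i ⧸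
                  Submodule.comap (zpowSub R n M i).subtype (zpowSub R n M (i + 1))) →ₗ[Az R n]
               (zpowSub R n N i ⧸
                  Submodule.comap (zpowSub R n N i).subtype (zpowSub R n N (i + 1))),
          (∀ (u : M) (hu : u ∈ zpowSub R n M i) (hv : φ u ∈ zpowSub R n N i),
            ψi (Submodule.Quotient.mk ⟨u, hu⟩) = Submodule.Quotient.mk ⟨φ u, hv⟩) →
          Function.Surjective ψi)) ∧
    -- (2) injectivity criterion
    ((∀ φ1 : ↥(ztor R n M 1) →ₗ[Az R n] ↥(ztor R n N 1),
        (∀ u : ↥(ztor R n M 1), ((φ1 u : ↥(ztor R n N 1)) : N) = φ (u : M)) →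
        (Function.Injective φ ↔ Function.Injective φ1)) ∧
      (Function.Injective φ → ∀ i : ℕ, 1 ≤ i → i ≤ n →
        ∀ φi : (ztor R n M i ⧸
                  Submodule.comap (ztor R n M i).subtype (ztor R n M (i - 1))) →ₗ[Az R n]
               (ztor R n N i ⧸
                  Submodule.comap (ztor R n N i).subtype (ztor R n N (i - 1))),
          (∀ (u : M) (hu : u ∈ ztor R n M i) (hv : φ u ∈ ztor R n N i),
            φi (Submodule.Quotient.mk ⟨u, hu⟩) = Submodule.Quotient.mk ⟨φ u, hv⟩) →
          Function.Injective φi)) := by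
  classical
  have hzn : (zc R n) ^ n = 0 := zcn_eq_zero R n
  refine ⟨⟨?_, ?_⟩, ?_, ?_⟩
  · -- (1a)
    intro ψ hψ
    constructor
    · intro hφ b
      obtain ⟨v, rfl⟩ := Submodule.Quotient.mk_surjective _ b
      obtain ⟨m, rfl⟩ := hφ v
      exact ⟨Submodule.Quotient.mk m, hψ m⟩
    · intro hψs
      have h1 : ∀ v : N, ∃ m w, v = φ m + zc R n • w := by
        intro v
        obtain ⟨q, hq⟩ := hψs (Submodule.Quotient.mk v)
        obtain ⟨m, rfl⟩ := Submodule.Quotient.mk_surjective _ q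
        rw [hψ m, Submodule.Quotient.eq] at hq
        obtain ⟨w, hw⟩ := (mem_zpowSub_iff R n N 1 _).mp hq
        refine ⟨m, -w, ?_⟩
        rw [pow_one] at hw
        rw [smul_neg, hw]
        abel
      have key : ∀ k, ∀ v : N, ∃ m w, v = φ m + (zc R n) ^ k • w := by
        intro k
        induction k with
        | zero => exact fun v => ⟨0, v, by simp⟩
        | succ k ih =>
          intro v
          obtain ⟨m, w, rfl⟩ := ih v
          obtain ⟨m', w', rfl⟩ := h1 w
          refine ⟨m + (zc R n) ^ k • m', w', ?_⟩
          rw [map_add, map_smul, smul_add, smul_smul, ← pow_succ, add_assoc]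
      intro v
      obtain ⟨m, w, hv⟩ := key n v
      exact ⟨m, by simp [hv, hzn]; exact zero_smul (Az R n) w⟩
  · -- (1b)
    intro hφ i _ ψi hψi b
    obtain ⟨⟨v, hv⟩, rfl⟩ := Submodule.Quotient.mk_surjective _ b
    obtain ⟨w, hw⟩ := (mem_zpowSub_iff R n N i v).mp hv
    obtain ⟨m, rfl⟩ := hφ w
    have hu : (zc R n) ^ i • m ∈ zpowSub R n M i :=
      (mem_zpowSub_iff R n M i _).mpr ⟨m, rfl⟩
    have heq : φ ((zc R n) ^ i • m) = v := by rw [map_smul]; exact hw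
    refine ⟨Submodule.Quotient.mk ⟨(zc R n) ^ i • m, hu⟩, ?_⟩
    rw [hψi _ hu (by rw [heq]; exact hv)]
    exact congrArg _ (Subtype.ext heq)
  · -- (2a)
    intro φ1 hφ1
    constructor
    · intro hφ u v huv
      apply Subtype.ext
      have h := congrArg (Subtype.val) huv
      rw [hφ1 u, hφ1 v] at h
      exact hφ h
    · intro h1
      rw [injective_iff_map_eq_zero]
      intro u hu
      by_contra hne
      have hn : (zc R n) ^ n • u = 0 := by rw [hzn]; exact zero_smul (Az R n) u
      have hex : ∃ j, (zc R n) ^ j • u = 0 := ⟨n, hn⟩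
      set j := Nat.find hex with hj
      have hjs : (zc R n) ^ j • u = 0 := Nat.find_spec hex
      have hj0 : j ≠ 0 := by
        intro h0
        rw [h0, pow_zero, one_smul] at hjs
        exact hne hjs
      obtain ⟨k, hk⟩ := Nat.exists_eq_succ_of_ne_zero hj0
      have hkne : (zc R n) ^ k • u ≠ 0 := Nat.find_min hex (by omega)
      have hw : (zc R n) ^ k • u ∈ ztor R n M 1 := by
        rw [mem_ztor_iff, pow_one, smul_smul, ← pow_succ']
        rw [hk] at hjs
        exact hjs
      have hφw : φ1 ⟨(zc R n) ^ k • u, hw⟩ = 0 := by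
        apply Subtype.ext
        show ((φ1 ⟨(zc R n) ^ k • u, hw⟩ : ↥(ztor R n N 1)) : N) = 0
        rw [hφ1]
        show φ ((zc R n) ^ k • u) = 0
        rw [map_smul, hu, smul_zero]
      have : (⟨(zc R n) ^ k • u, hw⟩ : ↥(ztor R n M 1)) = 0 :=
        h1 (by rw [hφw, map_zero])
      exact hkne (congrArg Subtype.val this)
  · -- (2b)
    intro hφ i _ _ φi hφi a b hab
    obtain ⟨⟨u, hu⟩, rfl⟩ := Submodule.Quotient.mk_surjective _ a
    obtain ⟨⟨v, hv⟩, rfl⟩ := Submodule.Quotient.mk_surjective _ b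
    have hfu : φ u ∈ ztor R n N i := by
      rw [mem_ztor_iff, ← map_smul, (mem_ztor_iff R n M i u).mp hu, map_zero]
    have hfv : φ v ∈ ztor R n N i := by
      rw [mem_ztor_iff, ← map_smul, (mem_ztor_iff R n M i v).mp hv, map_zero]
    rw [hφi u hu hfu, hφi v hv hfv, Submodule.Quotient.eq] at hab
    have hab' : (zc R n) ^ (i - 1) • (φ u - φ v) = 0 := by
      have := (mem_ztor_iff R n N (i - 1) _).mp (Submodule.mem_comap.mp hab)
      simpa using this
    have key : (zc R n) ^ (i - 1) • (u - v) = 0 := by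
      apply hφ
      rw [map_smul, map_sub, map_zero]
      exact hab'
    rw [Submodule.Quotient.eq, Submodule.mem_comap, mem_ztor_iff]
    simpa using key
end

section
/- Let R be a discrete valuation ring with uniformizer x, A = R[z]/(z^n), and M a finitely generated A-module with no nonzero element annihilated by a power of x. If M admits a finite resolution by finitely generated free A-modules, then M is free. -/
open Polynomial

set_option synthInstance.maxHeartbeats 1000000
set_option maxHeartbeats 1000000
set_option linter.unusedSectionVars false

section Helpers

variable {R : Type} [CommRing R] {n : ℕ}

lemma zc_pow_n : (zc R n) ^ n = 0 := by
  have h : (zc R n) ^ n = Ideal.Quotient.mk _ (X ^ n : R[X]) := by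
    simp [zc, map_pow]
  rw [h, Ideal.Quotient.eq_zero_iff_mem]
  exact Ideal.subset_span rfl

lemma zdvd [IsDomain R] {i : ℕ} (hi : i ≤ n) (a : Az R n)
    (h : (zc R n) ^ i * a = 0) : ∃ b, a = (zc R n) ^ (n - i) * b := by
  obtain ⟨p, rfl⟩ := Ideal.Quotient.mk_surjective a
  have h2 : (Ideal.Quotient.mk (Ideal.span ({X ^ n} : Set R[X]))) (X ^ i * p) = 0 := by
    simpa [zc, map_pow] using h
  rw [Ideal.Quotient.eq_zero_iff_mem, Ideal.mem_span_singleton] at h2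
  obtain ⟨q, hq⟩ := h2
  refine ⟨Ideal.Quotient.mk _ q, ?_⟩
  have hp : p = X ^ (n - i) * q := by
    have hX : (X : R[X]) ^ i ≠ 0 := pow_ne_zero _ X_ne_zero
    apply mul_left_cancel₀ hX
    rw [hq, ← mul_assoc, ← pow_add]
    congr 2
    omega
  rw [hp]
  simp [zc, map_pow]

end Helpers
section Descent

variable {R : Type} [CommRing R] [IsDomain R] {n : ℕ}

/-- The internal "ker z^i = z^(n-i) ⬝" property for a submodule. -/
def QK {F : Type} [AddCommGroup F] [Module (Az R n) F] (K : Submodule (Az R n) F) : Prop :=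
  ∀ i ≤ n, ∀ f ∈ K, (zc R n) ^ i • f = 0 → ∃ g ∈ K, f = (zc R n) ^ (n - i) • g

lemma piQ {ι : Type*} {i : ℕ} (hi : i ≤ n) (f : ι → Az R n)
    (h : (zc R n) ^ i • f = 0) : ∃ g : ι → Az R n, f = (zc R n) ^ (n - i) • g := by
  have h' : ∀ j, ∃ b, f j = (zc R n) ^ (n - i) * b := by
    intro j
    refine zdvd hi (f j) ?_
    have := congrFun h j
    simpa using this
  choose g hg using h'
  exact ⟨g, funext fun j => by simpa using hg j⟩

lemma descentQ {F G : Type} [AddCommGroup F] [Module (Az R n) F]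
    [AddCommGroup G] [Module (Az R n) G] (π : F →ₗ[Az R n] G)
    (hF : ∀ i ≤ n, ∀ f : F, (zc R n) ^ i • f = 0 → ∃ g, f = (zc R n) ^ (n - i) • g)
    (hK : QK (LinearMap.ker π)) : QK (LinearMap.range π) := by
  intro i hi u hu hzu
  obtain ⟨f, rfl⟩ := hu
  have h1 : (zc R n) ^ i • f ∈ LinearMap.ker π := by
    rw [LinearMap.mem_ker, map_smul, hzu]
  have h2 : (zc R n) ^ (n - i) • ((zc R n) ^ i • f) = 0 := by
    rw [smul_smul, ← pow_add]
    have : n - i + i = n := by omega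
    rw [this, zc_pow_n]; exact zero_smul (Az R n) f
  obtain ⟨g, hgK, hg⟩ := hK (n - i) (Nat.sub_le n i) _ h1 h2
  have hni : n - (n - i) = i := by omega
  rw [hni] at hg
  have h3 : (zc R n) ^ i • (f - g) = 0 := by
    rw [smul_sub, hg, sub_self]
  obtain ⟨h, hh⟩ := hF i hi _ h3
  refine ⟨π h, ⟨h, rfl⟩, ?_⟩
  have : π f = π (f - g) := by
    rw [map_sub, LinearMap.mem_ker.mp hgK, sub_zero]
  rw [this, hh, map_smul]

end Descent
/-- Let `R` be a DVR with uniformizer `x` and `A = R[z]/(z^n)`. If a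
finitely generated `A`-module `M` with no nonzero element annihilated by a power of `x`
admits a finite resolution `0 → A^{r_k} → ⋯ → A^{r_0} → M → 0` by finitely generated free
`A`-modules, then `M` is free. -/
theorem stmt17 (R : Type) [CommRing R] [IsDomain R] [IsDiscreteValuationRing R] (n : ℕ)
    (x : R) (hx : Irreducible x)
    (M : Type) [AddCommGroup M] [Module (Az R n) M] [Module.Finite (Az R n) M]
    (htf : ∀ (u : M) (p : ℕ), (algebraMap R (Az R n) x) ^ p • u = 0 → u = 0)
    (k : ℕ) (r : ℕ → ℕ) (hfin : ∀ i > k, r i = 0)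
    (d : ∀ i : ℕ, (Fin (r (i + 1)) → Az R n) →ₗ[Az R n] (Fin (r i) → Az R n))
    (ε : (Fin (r 0) → Az R n) →ₗ[Az R n] M)
    (hε : Function.Surjective ε)
    (h0 : LinearMap.ker ε = LinearMap.range (d 0))
    (hexact : ∀ i : ℕ, LinearMap.ker (d i) = LinearMap.range (d (i + 1))) :
    Module.Free (Az R n) M := by
  -- Part 1: the "Tor-vanishing" chain, giving ker(z^i) ⊆ z^(n-i) M.
  have hchain : ∀ m : ℕ, ∀ j : ℕ, k < j + m → QK (LinearMap.range (d j)) := by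
    intro m
    induction m with
    | zero =>
      intro j hj
      have hr : r (j + 1) = 0 := hfin (j + 1) (by omega)
      intro i hi f hf hzf
      refine ⟨0, Submodule.zero_mem _, ?_⟩
      obtain ⟨g, rfl⟩ := hf
      have : g = 0 := by
        funext t
        exact absurd (t.isLt) (by omega)
      rw [this, map_zero, smul_zero]
    | succ m ih =>
      intro j hj
      by_cases h : k < j + m
      · exact ih j h
      · have hQ : QK (LinearMap.ker (d j)) := by
          rw [hexact j]
          exact ih (j + 1) (by omega)
        exact descentQ (d j) (fun i hi f hf => piQ hi f hf) hQ
  have hM : QK (LinearMap.range ε) := by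
    refine descentQ ε (fun i hi f hf => piQ hi f hf) ?_
    rw [h0]
    exact hchain (k + 1) 0 (by omega)
  have key : ∀ i ≤ n, ∀ u : M, (zc R n) ^ i • u = 0 → ∃ v, u = (zc R n) ^ (n - i) • v := by
    intro i hi u hu
    obtain ⟨v, _, hv⟩ := hM i hi u (LinearMap.range_eq_top.mpr hε ▸ Submodule.mem_top) hu
    exact ⟨v, hv⟩
  clear hM hchain h0 hexact hfin d ε hε
  -- Part 2: deduce freeness
  rcases Nat.eq_zero_or_pos n with hn | hn
  · subst hn
    have h1 : (1 : Az R 0) = 0 := by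
      rw [← map_one (Ideal.Quotient.mk (Ideal.span ({X ^ 0} : Set R[X]))),
        Ideal.Quotient.eq_zero_iff_mem]
      exact Ideal.subset_span (by simp)
    have : Subsingleton M := ⟨fun a b => by
      calc a = (1 : Az R 0) • a := (one_smul _ _).symm
        _ = (0 : Az R 0) • a := by rw [h1]
        _ = (0 : Az R 0) • b := (zero_smul (Az R 0) a).trans (zero_smul (Az R 0) b).symm
        _ = (1 : Az R 0) • b := by rw [h1]
        _ = b := one_smul _ _⟩
    exact Module.Free.of_subsingleton (Az R 0) M
  -- now n ≥ 1
  have hev : ∀ p ∈ Ideal.span ({X ^ n} : Set R[X]), eval 0 p = 0 := by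
    intro p hp
    rw [Ideal.mem_span_singleton] at hp
    obtain ⟨q, rfl⟩ := hp
    simp [zero_pow hn.ne']
  let ct : Az R n →+* R :=
    Ideal.Quotient.lift _ (evalRingHom (0 : R)) (fun p hp => by simpa using hev p hp)
  have hct_alg : ∀ s : R, ct (algebraMap R (Az R n) s) = s := by
    intro s
    have h : algebraMap R (Az R n) s = Ideal.Quotient.mk _ (C s) := rfl
    rw [h]
    simp [ct]
  have hsplit : ∀ a : Az R n, ∃ a', a = zc R n * a' + algebraMap R (Az R n) (ct a) := by
    intro a
    obtain ⟨p, rfl⟩ := Ideal.Quotient.mk_surjective a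
    refine ⟨Ideal.Quotient.mk _ p.divX, ?_⟩
    have hct : ct (Ideal.Quotient.mk _ p) = p.coeff 0 := by
      simp [ct, coeff_zero_eq_eval_zero]
    rw [hct]
    have halg : algebraMap R (Az R n) (p.coeff 0) = Ideal.Quotient.mk _ (C (p.coeff 0)) := rfl
    rw [halg, zc, ← map_mul, ← map_add]
    congr 1
    exact (X_mul_divX_add p).symm
  letI : Module R M := Module.compHom M (algebraMap R (Az R n))
  haveI : IsScalarTower R (Az R n) M := ⟨fun r a m => by
    rw [show r • a = algebraMap R (Az R n) r * a from Algebra.smul_def r a, mul_smul]; rfl⟩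
  haveI : Module.Finite R (Az R n) := by
    have pb := AdjoinRoot.powerBasis' (monic_X_pow (R := R) (n := n))
    exact Module.Finite.of_basis pb.basis
  haveI : Module.Finite R M := Module.Finite.trans (Az R n) M
  set Z : Submodule (Az R n) M :=
    LinearMap.range ((zc R n) • (LinearMap.id : M →ₗ[Az R n] M)) with hZdef
  have hZ : ∀ m : M, m ∈ Z ↔ ∃ w, zc R n • w = m := by
    intro m
    constructor
    · rintro ⟨w, rfl⟩
      exact ⟨w, by simp⟩
    · rintro ⟨w, rfl⟩
      exact ⟨w, by simp⟩
  letI : Module R (M ⧸ Z) := Module.compHom _ (algebraMap R (Az R n))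
  haveI : IsScalarTower R (Az R n) (M ⧸ Z) := ⟨fun r a m => by
    rw [show r • a = algebraMap R (Az R n) r * a from Algebra.smul_def r a]; exact mul_smul (algebraMap R (Az R n) r) a m⟩
  haveI : Module.Finite R (M ⧸ Z) :=
    Module.Finite.of_surjective (Z.mkQ.restrictScalars R) (Submodule.Quotient.mk_surjective Z)
  have hz0 : ∀ y : M ⧸ Z, zc R n • y = 0 := by
    intro y
    obtain ⟨u, rfl⟩ := Submodule.Quotient.mk_surjective Z y
    rw [← Submodule.Quotient.mk_smul, Submodule.Quotient.mk_eq_zero]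
    exact (hZ _).mpr ⟨u, rfl⟩
  have hsmul_ct : ∀ (a : Az R n) (y : M ⧸ Z), a • y = ct a • y := by
    intro a y
    obtain ⟨a', ha⟩ := hsplit a
    calc a • y = (zc R n * a') • y + algebraMap R (Az R n) (ct a) • y := by
          rw [← add_smul (zc R n * a') (algebraMap R (Az R n) (ct a)) y, ← ha]
      _ = ct a • y := by
          have hm : (zc R n * a') • y = zc R n • a' • y := mul_smul (zc R n) a' y
          rw [hm, hz0, zero_add, algebraMap_smul]
  haveI : NoZeroSMulDivisors R (M ⧸ Z) := by
    refine ⟨fun {c y} h => ?_⟩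
    by_cases hc : c = 0
    · exact Or.inl hc
    right
    obtain ⟨u, rfl⟩ := Submodule.Quotient.mk_surjective Z y
    have h1 : algebraMap R (Az R n) c • Submodule.Quotient.mk (p := Z) u = 0 := by
      rw [algebraMap_smul]
      exact h
    rw [← Submodule.Quotient.mk_smul, Submodule.Quotient.mk_eq_zero] at h1
    obtain ⟨w, hw⟩ := (hZ _).mp h1
    have h2 : algebraMap R (Az R n) c • ((zc R n) ^ (n - 1) • u) = 0 := by
      rw [smul_smul, mul_comm (algebraMap R (Az R n) c), ← smul_smul, ← hw, smul_smul,
        ← pow_succ]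
      have he : n - 1 + 1 = n := by omega
      rw [he, zc_pow_n]
      exact zero_smul (Az R n) w
    obtain ⟨p, un, hcu⟩ := IsDiscreteValuationRing.eq_unit_mul_pow_irreducible hc hx
    have h3 : (algebraMap R (Az R n) x) ^ p • ((zc R n) ^ (n - 1) • u) = 0 := by
      have e1 : algebraMap R (Az R n) ((↑un⁻¹ : R)) •
          (algebraMap R (Az R n) c • ((zc R n) ^ (n - 1) • u)) = 0 := by
        rw [h2, smul_zero]
      rw [smul_smul, ← map_mul, hcu] at e1
      have e2 : (↑un⁻¹ : R) * (↑un * x ^ p) = x ^ p := by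
        rw [← mul_assoc, Units.inv_mul, one_mul]
      rw [e2, map_pow] at e1
      exact e1
    have h4 := htf _ p h3
    obtain ⟨v', hv'⟩ := key (n - 1) (by omega) u (by rw [h4])
    rw [Submodule.Quotient.mk_eq_zero]
    refine (hZ u).mpr ⟨v', ?_⟩
    have he : n - (n - 1) = 1 := by omega
    rw [he, pow_one] at hv'
    exact hv'.symm
  haveI hfree : Module.Free R (M ⧸ Z) := Module.free_of_finite_type_torsion_free'
  set b := Module.Free.chooseBasis R (M ⧸ Z) with hbdef
  choose uu hu using fun i => Submodule.Quotient.mk_surjective Z (b i)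
  set φ : (Module.Free.ChooseBasisIndex R (M ⧸ Z) → Az R n) →ₗ[Az R n] M :=
    { toFun := fun a => ∑ i, a i • uu i
      map_add' := fun a1 a2 => by
        simp [add_smul, Finset.sum_add_distrib]
      map_smul' := fun c a => by
        simp [Finset.smul_sum, mul_smul] } with hφdef
  have hφ : ∀ a, φ a = ∑ i, a i • uu i := fun a => rfl
  have hqφ : ∀ a, Submodule.Quotient.mk (p := Z) (φ a) = ∑ i, ct (a i) • b i := by
    intro a
    rw [hφ, ← Submodule.mkQ_apply, map_sum]
    simp only [map_smul, Submodule.mkQ_apply, hu]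
    exact Finset.sum_congr rfl fun i _ => hsmul_ct _ _
  have hL1 : ∀ a, φ a = 0 → ∀ i, ∃ e, a i = zc R n * e := by
    intro a ha i
    have h1 : (∑ j, ct (a j) • b j) = 0 := by
      rw [← hqφ, ha, ← Submodule.mkQ_apply, map_zero]
    have h2 := Fintype.linearIndependent_iff.mp b.linearIndependent (fun j => ct (a j)) h1 i
    obtain ⟨e, he⟩ := hsplit (a i)
    refine ⟨e, ?_⟩
    rw [he, h2, map_zero, add_zero]
  have step1 : ∀ m : M, ∃ a w, m = φ a + zc R n • w := by
    intro m
    have hc : ∑ i, b.equivFun (Submodule.Quotient.mk (p := Z) m) i • b i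
        = Submodule.Quotient.mk (p := Z) m := b.sum_equivFun _
    set a : Module.Free.ChooseBasisIndex R (M ⧸ Z) → Az R n :=
      fun i => algebraMap R (Az R n) (b.equivFun (Submodule.Quotient.mk (p := Z) m) i) with hadef
    have h1 : Submodule.Quotient.mk (p := Z) (φ a) = Submodule.Quotient.mk (p := Z) m := by
      rw [hqφ, ← hc]
      refine Finset.sum_congr rfl fun i _ => ?_
      rw [hadef]
      rw [hct_alg]
    obtain ⟨w, hw⟩ := (hZ _).mp ((Submodule.Quotient.eq Z).mp h1.symm)
    exact ⟨a, w, by rw [hw]; abel⟩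
  have hsur : ∀ t, ∀ m : M, ∃ a w, m = φ a + (zc R n) ^ t • w := by
    intro t
    induction t with
    | zero => intro m; exact ⟨0, m, by simp⟩
    | succ t ih =>
      intro m
      obtain ⟨a, w, hm⟩ := ih m
      obtain ⟨a2, w2, hw⟩ := step1 w
      refine ⟨a + (zc R n) ^ t • a2, w2, ?_⟩
      rw [hm, hw, map_add, map_smul, smul_add, smul_smul, ← pow_succ, add_assoc]
  have hsurj : Function.Surjective φ := by
    intro m
    obtain ⟨a, w, hm⟩ := hsur n m
    refine ⟨a, ?_⟩
    rw [hm, zc_pow_n, zero_smul (Az R n) w, add_zero]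
  have haux : ∀ t, ∀ a, φ a = 0 → ∃ bb, a = (zc R n) ^ (min t n) • bb := by
    intro t
    induction t with
    | zero => intro a _; exact ⟨a, by simp⟩
    | succ t ih =>
      intro a ha
      by_cases htn : n ≤ t
      · have h1 : min (t + 1) n = min t n := by omega
        rw [h1]
        exact ih a ha
      · push_neg at htn
        obtain ⟨bb, hbb⟩ := ih a ha
        have hmin : min t n = t := by omega
        rw [hmin] at hbb
        have h2 : (zc R n) ^ t • φ bb = 0 := by
          rw [← map_smul, ← hbb, ha]
        obtain ⟨v, hv⟩ := key t (by omega) (φ bb) h2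
        obtain ⟨cc, hcc⟩ := hsurj v
        have h3 : φ (bb - (zc R n) ^ (n - t) • cc) = 0 := by
          rw [map_sub, map_smul, hcc, ← hv, sub_self]
        choose e he using hL1 _ h3
        refine ⟨e, ?_⟩
        have hmin2 : min (t + 1) n = t + 1 := by omega
        rw [hmin2, hbb]
        funext i
        have hbbi : bb i = zc R n * e i + (zc R n) ^ (n - t) * cc i := by
          have h5 := he i
          rw [Pi.sub_apply, Pi.smul_apply, smul_eq_mul] at h5
          linear_combination h5
        have hzn : (zc R n) ^ t * (zc R n) ^ (n - t) = 0 := by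
          rw [← pow_add]
          have he2 : t + (n - t) = n := by omega
          rw [he2, zc_pow_n]
        rw [Pi.smul_apply, Pi.smul_apply, smul_eq_mul, smul_eq_mul, hbbi]
        calc (zc R n) ^ t * (zc R n * e i + (zc R n) ^ (n - t) * cc i)
            = (zc R n) ^ (t + 1) * e i + ((zc R n) ^ t * (zc R n) ^ (n - t)) * cc i := by ring
          _ = (zc R n) ^ (t + 1) * e i := by rw [hzn, zero_mul, add_zero]
  have hinj : Function.Injective φ := by
    intro a1 a2 h12
    have h0' : φ (a1 - a2) = 0 := by rw [map_sub, h12, sub_self]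
    obtain ⟨bb, hbb⟩ := haux n _ h0'
    rw [min_self, zc_pow_n, zero_smul (Az R n) bb] at hbb
    exact sub_eq_zero.mp hbb
  exact Module.Free.of_equiv (LinearEquiv.ofBijective φ ⟨hinj, hsurj⟩)
end
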